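/- arXiv:1606.09548 — 2 statements merged into one kernel-verified Lean document; each statement's English description precedes it below -/
import Mathlib

section
/- In the setting of the dithered nested linear code index counting, for 1 ≤ t ≤ K-1, the rank-(K+t) index set satisfies |I_{K+t}| ≤ q^{n_1+⋯+n_K} · q^{K²} · ∑_{1 ≤ j_1 < ⋯ < j_t ≤ K} q^{n_{j_1}+⋯+n_{j_t}}. -/
open scoped BigOperators

/-- The rank of the `2K`-row matrix whose rows are `[e_k, η_k(l_k)]` and
`[e_k, η_k(l̃_k)]`, viewed as the dimension of the span of the rows in
`F^K × F^κ`. -/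
noncomputable def pairRank {F : Type*} [Field F] (κ K : ℕ)
    {Idx : Fin K → Type*} (η : (k : Fin K) → Idx k → Fin κ → F)
    (p : ((k : Fin K) → Idx k) × ((k : Fin K) → Idx k)) : ℕ :=
  Module.finrank F (Submodule.span F (Set.range (Sum.elim
    (fun k : Fin K => (((Pi.single k 1 : Fin K → F), η k (p.1 k)) : (Fin K → F) × (Fin κ → F)))
    (fun k : Fin K => ((Pi.single k 1 : Fin K → F), η k (p.2 k))))))

open Classical in
/-- A coefficient function witnessing membership in a span of a finite family. -/
noncomputable def pickCoeff {F : Type*} [Field F] {ι : Type*} [Fintype ι] {V : Type*}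
    [AddCommGroup V] [Module F V] (v : ι → V) (x : V) : ι → F :=
  if h : x ∈ Submodule.span F (Set.range v) then
    Classical.choose ((Submodule.mem_span_range_iff_exists_fun F).mp h) else 0

open Classical in
lemma pickCoeff_spec {F : Type*} [Field F] {ι : Type*} [Fintype ι] {V : Type*}
    [AddCommGroup V] [Module F V] (v : ι → V) (x : V)
    (h : x ∈ Submodule.span F (Set.range v)) :
    ∑ i, pickCoeff (F := F) v x i • v i = x := by
  rw [pickCoeff, dif_pos h]
  exact Classical.choose_spec ((Submodule.mem_span_range_iff_exists_fun F).mp h)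

/-- Rank decomposition: the `2K`-row matrix has rank `K` plus the rank of the
difference rows. -/
lemma pairRank_eq_aux {F : Type*} [Field F] (κ K : ℕ)
    {Idx : Fin K → Type*} (η : (k : Fin K) → Idx k → Fin κ → F)
    (p : ((k : Fin K) → Idx k) × ((k : Fin K) → Idx k)) :
    pairRank κ K η p
      = K + Module.finrank F (Submodule.span F
          (Set.range fun k => η k (p.2 k) - η k (p.1 k))) := by
  classical
  unfold pairRank
  set a : Fin K → (Fin K → F) × (Fin κ → F) :=
    fun k => (Pi.single k 1, η k (p.1 k)) with ha_def
  set b : Fin K → (Fin K → F) × (Fin κ → F) :=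
    fun k => (Pi.single k 1, η k (p.2 k)) with hb_def
  set d : Fin K → (Fin κ → F) := fun k => η k (p.2 k) - η k (p.1 k) with hd_def
  set d0 : Fin K → (Fin K → F) × (Fin κ → F) := fun k => (0, d k) with hd0_def
  have hspan : Submodule.span F (Set.range (Sum.elim a b))
      = Submodule.span F (Set.range a) ⊔ Submodule.span F (Set.range d0) := by
    rw [Set.Sum.elim_range, Submodule.span_union]
    apply le_antisymm
    · apply sup_le le_sup_left
      rw [Submodule.span_le]
      rintro _ ⟨k, rfl⟩
      have hb : b k = a k + d0 k := by
        simp [ha_def, hb_def, hd0_def, hd_def, Prod.ext_iff]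
      rw [hb]
      exact Submodule.add_mem _
        (Submodule.mem_sup_left (Submodule.subset_span ⟨k, rfl⟩))
        (Submodule.mem_sup_right (Submodule.subset_span ⟨k, rfl⟩))
    · apply sup_le le_sup_left
      rw [Submodule.span_le]
      rintro _ ⟨k, rfl⟩
      have hd0 : d0 k = b k - a k := by
        simp [ha_def, hb_def, hd0_def, hd_def, Prod.ext_iff]
      rw [hd0]
      exact Submodule.sub_mem _
        (Submodule.mem_sup_right (Submodule.subset_span ⟨k, rfl⟩))
        (Submodule.mem_sup_left (Submodule.subset_span ⟨k, rfl⟩))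
  have hd0le : Submodule.span F (Set.range d0)
      ≤ LinearMap.ker (LinearMap.fst F (Fin K → F) (Fin κ → F)) := by
    rw [Submodule.span_le]
    rintro _ ⟨k, rfl⟩
    simp [hd0_def]
  set g : (Fin K → F) →ₗ[F] (Fin K → F) × (Fin κ → F) :=
    LinearMap.prod LinearMap.id (Fintype.linearCombination F (fun k => η k (p.1 k)))
      with hg_def
  have hale : Submodule.span F (Set.range a) ≤ LinearMap.range g := by
    rw [Submodule.span_le]
    rintro _ ⟨k, rfl⟩
    refine ⟨Pi.single k 1, ?_⟩
    simp [hg_def, ha_def, Fintype.linearCombination_apply_single]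
  have hinf : Submodule.span F (Set.range a) ⊓ Submodule.span F (Set.range d0) = ⊥ := by
    rw [eq_bot_iff]
    intro x hx
    rw [Submodule.mem_inf] at hx
    obtain ⟨hxa, hxd⟩ := hx
    obtain ⟨c, rfl⟩ := hale hxa
    have h1 : c = 0 := by
      have := hd0le hxd
      simpa [hg_def] using this
    simp [h1, Submodule.mem_bot]
  have hinda : LinearIndependent F a := by
    have h0 : LinearIndependent F (fun k : Fin K => (Pi.single k 1 : Fin K → F)) := by
      have h := (Pi.basisFun F (Fin K)).linearIndependent
      rwa [show ⇑(Pi.basisFun F (Fin K)) = fun k => (Pi.single k 1 : Fin K → F) from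
        funext fun k => Pi.basisFun_apply F (Fin K) k] at h
    exact LinearIndependent.of_comp (LinearMap.fst F (Fin K → F) (Fin κ → F)) h0
  have hrka : Module.finrank F (Submodule.span F (Set.range a)) = K := by
    rw [finrank_span_eq_card hinda, Fintype.card_fin]
  have hrkd0 : Module.finrank F (Submodule.span F (Set.range d0))
      = Module.finrank F (Submodule.span F (Set.range d)) := by
    have hmap : Submodule.span F (Set.range d0)
        = Submodule.map (LinearMap.inr F (Fin K → F) (Fin κ → F))
            (Submodule.span F (Set.range d)) := by
      rw [Submodule.map_span, ← Set.range_comp]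
      rfl
    rw [hmap]
    exact (Submodule.equivMapOfInjective _ LinearMap.inr_injective _).finrank_eq.symm
  have hsum := Submodule.finrank_sup_add_finrank_inf_eq
    (Submodule.span F (Set.range a)) (Submodule.span F (Set.range d0))
  rw [hinf, finrank_bot, add_zero, hrka, hrkd0] at hsum
  rw [hspan, hsum]

/-- From rank at most `t`, one can find a `t`-element index set whose difference
rows span all difference rows. -/
lemma exists_spanning_subset {F : Type*} [Field F] {K κ t : ℕ} (d : Fin K → (Fin κ → F))
    (hrk : Module.finrank F (Submodule.span F (Set.range d)) ≤ t) (htK : t ≤ K) :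
    ∃ s ∈ Finset.powersetCard t (Finset.univ : Finset (Fin K)),
      ∀ k, d k ∈ Submodule.span F (Set.range (fun j : {x // x ∈ s} => d j.1)) := by
  classical
  obtain ⟨b, hb_sub, hb_span, hb_li⟩ := exists_linearIndependent F (Set.range d)
  have hbfin : b.Finite := (Set.finite_range d).subset hb_sub
  haveI : Fintype b := hbfin.fintype
  have hcard : b.toFinset.card ≤ t := by
    have h1 := finrank_span_set_eq_card hb_li
    rw [hb_span] at h1
    omega
  set s₀ : Finset (Fin K) := b.toFinset.attach.image
      (fun v => Classical.choose (hb_sub (Set.mem_toFinset.mp v.2))) with hs₀_def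
  have hs₀card : s₀.card ≤ t :=
    le_trans (le_trans Finset.card_image_le (le_of_eq (Finset.card_attach))) hcard
  have hbsub : b ⊆ d '' ↑s₀ := by
    intro x hx
    refine ⟨Classical.choose (hb_sub (Set.mem_toFinset.mp
      (Set.mem_toFinset.mpr hx : x ∈ b.toFinset))), ?_, ?_⟩
    · exact Finset.mem_image.mpr ⟨⟨x, Set.mem_toFinset.mpr hx⟩, Finset.mem_attach _ _, rfl⟩
    · exact Classical.choose_spec (hb_sub (Set.mem_toFinset.mp
        (Set.mem_toFinset.mpr hx : x ∈ b.toFinset)))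
  obtain ⟨s, hs₀s, hsu, hscard⟩ := Finset.exists_subsuperset_card_eq
    (Finset.subset_univ s₀) hs₀card (by simpa using htK)
  refine ⟨s, Finset.mem_powersetCard.mpr ⟨hsu, hscard⟩, fun k => ?_⟩
  have h1 : d k ∈ Submodule.span F b := by
    rw [hb_span]
    exact Submodule.subset_span (Set.mem_range_self k)
  have h2 : b ⊆ d '' ↑s :=
    hbsub.trans (Set.image_mono (f := d) (by exact_mod_cast hs₀s))
  have h3 : d k ∈ Submodule.span F (d '' ↑s) := Submodule.span_mono h2 h1
  rwa [Set.image_eq_range d (↑s : Set (Fin K))] at h3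

/-- Counting index tuples of intermediate rank deficiency: for `1 ≤ t ≤ K - 1`,
`|I_{K+t}| ≤ q^{n_1+⋯+n_K} · q^{K²} · ∑_{1≤j_1<⋯<j_t≤K} q^{n_{j_1}+⋯+n_{j_t}}`. -/
theorem stmt_10 {F : Type*} [Field F] [Fintype F] [DecidableEq F]
    (q κ K : ℕ) (hq : Fintype.card F = q)
    (nk : Fin K → ℕ)
    (η : (k : Fin K) → Fin (q ^ nk k) → Fin κ → F)
    (hη : ∀ k, Function.Injective (η k))
    (t : ℕ) (ht1 : 1 ≤ t) (ht2 : t ≤ K - 1) :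
    Set.ncard {p : ((k : Fin K) → Fin (q ^ nk k)) × ((k : Fin K) → Fin (q ^ nk k)) |
        pairRank κ K η p = K + t}
      ≤ q ^ (∑ k, nk k) * q ^ (K ^ 2) *
          ∑ s ∈ Finset.powersetCard t (Finset.univ : Finset (Fin K)),
            q ^ (∑ k ∈ s, nk k) := by
  classical
  have htK : t ≤ K := le_trans ht2 (Nat.sub_le K 1)
  set S : Set (((k : Fin K) → Fin (q ^ nk k)) × ((k : Fin K) → Fin (q ^ nk k))) :=
    {p | pairRank κ K η p = K + t} with hS_def
  set T : Finset (Fin K) →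
      Finset (((k : Fin K) → Fin (q ^ nk k)) × ((k : Fin K) → Fin (q ^ nk k))) :=
    fun s => Finset.univ.filter (fun p => ∀ k,
      (η k (p.2 k) - η k (p.1 k)) ∈ Submodule.span F
        (Set.range (fun j : {x // x ∈ s} => η j.1 (p.2 j.1) - η j.1 (p.1 j.1)))) with hT_def
  have hncard : S.ncard = S.toFinset.card := S.ncard_eq_toFinset_card'
  rw [hncard]
  have hsubset : S.toFinset
      ⊆ (Finset.powersetCard t (Finset.univ : Finset (Fin K))).biUnion T := by
    intro p hp
    rw [Set.mem_toFinset] at hp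
    have hrank : Module.finrank F (Submodule.span F
        (Set.range fun k => η k (p.2 k) - η k (p.1 k))) ≤ t := by
      have h := pairRank_eq_aux κ K η p
      rw [hp] at h
      omega
    obtain ⟨s, hs, hspan⟩ := exists_spanning_subset
      (fun k => η k (p.2 k) - η k (p.1 k)) hrank htK
    exact Finset.mem_biUnion.mpr ⟨s, hs,
      Finset.mem_filter.mpr ⟨Finset.mem_univ _, hspan⟩⟩
  have hcount : ∀ s : Finset (Fin K),
      (T s).card ≤ q ^ (∑ k, nk k) * q ^ (K ^ 2) * q ^ (∑ k ∈ s, nk k) := by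
    intro s
    set Φ : (((k : Fin K) → Fin (q ^ nk k)) × ((k : Fin K) → Fin (q ^ nk k))) →
        (((k : Fin K) → Fin (q ^ nk k)) × ((j : {x // x ∈ s}) → Fin (q ^ nk j.1))
          × (Fin K → Fin K → F)) :=
      fun p => (p.1, fun j => p.2 j.1, fun k j =>
        if hj : j ∈ s then
          pickCoeff (F := F) (fun i : {x // x ∈ s} => η i.1 (p.2 i.1) - η i.1 (p.1 i.1))
            (η k (p.2 k) - η k (p.1 k)) ⟨j, hj⟩
        else 0) with hΦ_def
    have hinj : Set.InjOn Φ (T s) := by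
      intro p hp p' hp' heq
      rw [Finset.mem_coe, hT_def, Finset.mem_filter] at hp hp'
      have hmem := hp.2
      have hmem' := hp'.2
      have h1 : p.1 = p'.1 := congrArg (fun x => x.1) heq
      have h2 : ∀ j : {x // x ∈ s}, p.2 j.1 = p'.2 j.1 := by
        intro j
        have := congrArg (fun x => x.2.1 j) heq
        simpa [hΦ_def] using this
      have hvs : (fun i : {x // x ∈ s} => η i.1 (p.2 i.1) - η i.1 (p.1 i.1))
          = (fun i : {x // x ∈ s} => η i.1 (p'.2 i.1) - η i.1 (p'.1 i.1)) := by
        funext i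
        rw [h2 i, h1]
      have h3 : ∀ k, p.2 k = p'.2 k := by
        intro k
        have hco : ∀ i : {x // x ∈ s},
            pickCoeff (F := F) (fun i : {x // x ∈ s} => η i.1 (p.2 i.1) - η i.1 (p.1 i.1))
              (η k (p.2 k) - η k (p.1 k)) i
            = pickCoeff (F := F) (fun i : {x // x ∈ s} => η i.1 (p'.2 i.1) - η i.1 (p'.1 i.1))
              (η k (p'.2 k) - η k (p'.1 k)) i := by
          rintro ⟨i, hi⟩
          have := congrArg (fun x => x.2.2 k i) heq
          simpa [hΦ_def, dif_pos hi] using this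
        have hdk : η k (p.2 k) - η k (p.1 k) = η k (p'.2 k) - η k (p'.1 k) := by
          have e1 := pickCoeff_spec
            (fun i : {x // x ∈ s} => η i.1 (p.2 i.1) - η i.1 (p.1 i.1))
            (η k (p.2 k) - η k (p.1 k)) (hmem k)
          have e2 := pickCoeff_spec
            (fun i : {x // x ∈ s} => η i.1 (p'.2 i.1) - η i.1 (p'.1 i.1))
            (η k (p'.2 k) - η k (p'.1 k)) (hmem' k)
          rw [← e1, ← e2, funext hco]
          simp only [h1, h2]
        have : η k (p.2 k) = η k (p'.2 k) := by
          have h1k : η k (p.1 k) = η k (p'.1 k) := by rw [h1]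
          have := sub_eq_sub_iff_add_eq_add.mp hdk
          rw [h1k] at hdk
          exact sub_left_injective.eq_iff.mp hdk
        exact hη k this
      exact Prod.ext h1 (funext h3)
    have hcardle : (T s).card ≤ Fintype.card
        (((k : Fin K) → Fin (q ^ nk k)) × ((j : {x // x ∈ s}) → Fin (q ^ nk j.1))
          × (Fin K → Fin K → F)) := by
      rw [← Finset.card_univ]
      exact Finset.card_le_card_of_injOn Φ (fun p _ => Finset.mem_univ _) hinj
    have hcardD : Fintype.card
        (((k : Fin K) → Fin (q ^ nk k)) × ((j : {x // x ∈ s}) → Fin (q ^ nk j.1))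
          × (Fin K → Fin K → F))
        = q ^ (∑ k, nk k) * (q ^ (∑ k ∈ s, nk k) * q ^ (K ^ 2)) := by
      rw [Fintype.card_prod, Fintype.card_prod]
      congr 1
      · rw [Fintype.card_pi]
        simp only [Fintype.card_fin]
        exact Finset.prod_pow_eq_pow_sum _ _ _
      congr 1
      · rw [Fintype.card_pi]
        simp only [Fintype.card_fin]
        rw [Finset.prod_coe_sort s (fun j => q ^ nk j)]
        exact Finset.prod_pow_eq_pow_sum _ _ _
      · rw [Fintype.card_fun, Fintype.card_fun, Fintype.card_fin, hq, ← pow_mul, sq]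
    calc (T s).card ≤ _ := hcardle
      _ = _ := hcardD
      _ = q ^ (∑ k, nk k) * q ^ (K ^ 2) * q ^ (∑ k ∈ s, nk k) := by ring
  calc S.toFinset.card
      ≤ ((Finset.powersetCard t (Finset.univ : Finset (Fin K))).biUnion T).card :=
        Finset.card_le_card hsubset
    _ ≤ ∑ s ∈ Finset.powersetCard t (Finset.univ : Finset (Fin K)), (T s).card :=
        Finset.card_biUnion_le
    _ ≤ ∑ s ∈ Finset.powersetCard t (Finset.univ : Finset (Fin K)),
          q ^ (∑ k, nk k) * q ^ (K ^ 2) * q ^ (∑ k ∈ s, nk k) :=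
        Finset.sum_le_sum fun s _ => hcount s
    _ = _ := by rw [← Finset.mul_sum]
end

section
/- Mismatched packing lemma: Let (X,Y) ∼ p_{X,Y} on finite alphabets and p̃_X a pmf on 𝒳 with D(p_X||p̃_X) < ∞. Let Ỹ^n be an arbitrary random sequence, and let X̃^n(m), m ∈ C with |C| ≤ 2^{nR}, each be distributed i.i.d. ∼ p̃_X and pairwise independent of Ỹ^n (but arbitrarily dependent among themselves). If R < I(X;Y) + D(p_X||p̃_X) − δ(ε), then P{(X̃^n(m), Ỹ^n) ∈ T_ε^(n)(X,Y) for some m ∈ C} → 0 as n → ∞. -/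
open scoped BigOperators

open MeasureTheory

set_option linter.unusedSectionVars false
set_option maxHeartbeats 1000000

section PackingAux
variable {X Y : Type} [Fintype X] [Fintype Y] [DecidableEq X] [DecidableEq Y]

noncomputable def pkY (p : X × Y → ℝ) (y : Y) : ℝ := ∑ x, p (x, y)

noncomputable def pkQ (p : X × Y → ℝ) (x : X) (y : Y) : ℝ :=
  if pkY p y = 0 then (Fintype.card X : ℝ)⁻¹ else p (x, y) / pkY p y

noncomputable def pkL (p : X × Y → ℝ) (ptil : X → ℝ) (z : X × Y) : ℝ :=
  Real.logb 2 (ptil z.1 * pkY p z.2 / p z)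

noncomputable def pkC (p : X × Y → ℝ) (ptil : X → ℝ) : ℝ :=
  ∑ z, p z * |pkL p ptil z|

lemma pkQ_nonneg (p : X × Y → ℝ) (hp0 : ∀ z, 0 ≤ p z) (x : X) (y : Y) :
    0 ≤ pkQ p x y := by
  unfold pkQ
  split_ifs with h
  · positivity
  · have : 0 ≤ pkY p y := Finset.sum_nonneg fun x _ => hp0 _
    exact div_nonneg (hp0 _) this

lemma pkQ_sum (p : X × Y → ℝ) (hX : Nonempty X) (y : Y) :
    ∑ x, pkQ p x y = 1 := by
  unfold pkQ
  split_ifs with h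
  · rw [Finset.sum_const, nsmul_eq_mul, Finset.card_univ, mul_inv_cancel₀]
    exact Nat.cast_ne_zero.mpr Fintype.card_ne_zero
  · rw [← Finset.sum_div]
    exact div_self h

lemma keyA (p : X × Y → ℝ) (hp0 : ∀ z, 0 ≤ p z)
    (ptil : X → ℝ) (hpt0 : ∀ x, 0 ≤ ptil x)
    (habs : ∀ x, (∑ y, p (x, y)) ≠ 0 → ptil x ≠ 0)
    (ε : ℝ) (hε : 0 < ε) (n : ℕ) (xs : Fin n → X) (ys : Fin n → Y)
    (htyp : ∀ z : X × Y,
      |((Finset.univ.filter (fun i : Fin n => (xs i, ys i) = z)).card : ℝ) / n - p z|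
        ≤ ε * p z) :
    ∏ i, ptil (xs i) ≤
      (2:ℝ) ^ ((n:ℝ) * ((∑ z, p z * pkL p ptil z) + ε * pkC p ptil)) *
        ∏ i, pkQ p (xs i) (ys i) := by
  rcases Nat.eq_zero_or_pos n with hn | hn
  · subst hn; simp
  set N : X × Y → ℕ := fun z => (Finset.univ.filter (fun i : Fin n => (xs i, ys i) = z)).card
    with hN
  -- positivity of p on occurring pairs
  have hNp : ∀ z, N z ≠ 0 → 0 < p z := by
    intro z hz
    rcases (hp0 z).lt_or_eq with h | h
    · exact h
    · exfalso
      have h1 := htyp z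
      rw [← h, mul_zero, sub_zero, abs_div] at h1
      have hnn : (0:ℝ) < |(n:ℝ)| := abs_pos.mpr (Nat.cast_ne_zero.mpr hn.ne')
      rw [div_le_iff₀ hnn, zero_mul] at h1
      have h3 : (Finset.univ.filter (fun i : Fin n => (xs i, ys i) = z)) = ∅ := by
        simpa using h1
      exact hz (by simp [hN, h3])
  have hocc : ∀ i : Fin n, 0 < p (xs i, ys i) := by
    intro i
    apply hNp
    have : i ∈ Finset.univ.filter (fun j : Fin n => (xs j, ys j) = (xs i, ys i)) := by
      simp
    exact Finset.card_ne_zero_of_mem this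
  have hpY : ∀ i : Fin n, 0 < pkY p (ys i) := fun i =>
    lt_of_lt_of_le (hocc i)
      (Finset.single_le_sum (fun x _ => hp0 (x, ys i)) (Finset.mem_univ (xs i)))
  have hpX : ∀ i : Fin n, 0 < ∑ y, p (xs i, y) := fun i =>
    lt_of_lt_of_le (hocc i)
      (Finset.single_le_sum (fun y _ => hp0 (xs i, y)) (Finset.mem_univ (ys i)))
  have hpt : ∀ i : Fin n, 0 < ptil (xs i) := fun i =>
    (hpt0 _).lt_of_ne' (habs _ (hpX i).ne')
  have hq : ∀ i : Fin n, 0 < pkQ p (xs i) (ys i) := by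
    intro i
    unfold pkQ
    rw [if_neg (hpY i).ne']
    exact div_pos (hocc i) (hpY i)
  -- rewrite as powers of two
  have h2 : (1:ℝ) < 2 := one_lt_two
  have eprod : ∀ (f : Fin n → ℝ), (∀ i, 0 < f i) →
      ∏ i, f i = (2:ℝ) ^ (∑ i, Real.logb 2 (f i)) := by
    intro f hf
    rw [Real.rpow_sum_of_pos two_pos]
    exact Finset.prod_congr rfl fun i _ => (Real.rpow_logb two_pos (by norm_num) (hf i)).symm
  rw [eprod _ hpt, eprod _ hq, ← Real.rpow_add two_pos,
    Real.rpow_le_rpow_left_iff h2]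
  rw [← sub_le_iff_le_add]
  have hdiff : ∀ i : Fin n, Real.logb 2 (ptil (xs i)) - Real.logb 2 (pkQ p (xs i) (ys i))
      = pkL p ptil (xs i, ys i) := by
    intro i
    rw [← Real.logb_div (hpt i).ne' (hq i).ne']
    unfold pkL pkQ
    rw [if_neg (hpY i).ne']
    congr 1
    field_simp
  rw [← Finset.sum_sub_distrib]
  simp_rw [hdiff]
  -- group by value
  have hgroup : ∑ i, pkL p ptil (xs i, ys i)
      = ∑ z, (N z : ℝ) * pkL p ptil z := by
    rw [Finset.sum_comp (pkL p ptil) (fun i : Fin n => (xs i, ys i))]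
    rw [Finset.sum_subset (Finset.subset_univ _)]
    · simp [hN, nsmul_eq_mul]
    · intro z _ hz
      have he : (Finset.univ.filter (fun i : Fin n => (xs i, ys i) = z)) = ∅ := by
        rw [Finset.filter_eq_empty_iff]
        intro i _
        exact fun h => hz (Finset.mem_image.mpr ⟨i, Finset.mem_univ i, h⟩)
      rw [he]
      simp
  rw [hgroup]
  have hterm : ∀ z : X × Y, (N z : ℝ) * pkL p ptil z
      ≤ (n:ℝ) * (p z * pkL p ptil z + ε * (p z * |pkL p ptil z|)) := by
    intro z
    rcases (hp0 z).eq_or_lt with h | hpz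
    · have hNz : N z = 0 := by
        by_contra hne
        exact absurd (hNp z hne) (by rw [← h]; exact lt_irrefl 0)
      simp [hNz, ← h]
    · have hnn : (0:ℝ) < n := Nat.cast_pos.mpr hn
      have ht : |(N z : ℝ)/n - p z| ≤ ε * p z := htyp z
      have ht2 := mul_le_mul_of_nonneg_right ht hnn.le
      have hNb : |(N z : ℝ) - n * p z| ≤ ε * ((n:ℝ) * p z) := by
        calc |(N z : ℝ) - n * p z| = |(N z : ℝ)/n - p z| * n := by
              rw [← abs_of_pos hnn, ← abs_mul]
              congr 1
              field_simp
              rw [abs_of_pos hnn]; ring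
          _ ≤ ε * p z * n := ht2
          _ = ε * ((n:ℝ) * p z) := by ring
      have hstep : (N z : ℝ) * pkL p ptil z - (n:ℝ) * p z * pkL p ptil z
          ≤ ε * ((n:ℝ) * p z) * |pkL p ptil z| := by
        calc (N z : ℝ) * pkL p ptil z - (n:ℝ) * p z * pkL p ptil z
            = ((N z : ℝ) - n * p z) * pkL p ptil z := by ring
          _ ≤ |((N z : ℝ) - n * p z) * pkL p ptil z| := le_abs_self _
          _ = |(N z : ℝ) - n * p z| * |pkL p ptil z| := abs_mul _ _
          _ ≤ ε * ((n:ℝ) * p z) * |pkL p ptil z| :=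
              mul_le_mul_of_nonneg_right hNb (abs_nonneg _)
      nlinarith [hstep]
  calc ∑ z, (N z : ℝ) * pkL p ptil z
      ≤ ∑ z, (n:ℝ) * (p z * pkL p ptil z + ε * (p z * |pkL p ptil z|)) :=
        Finset.sum_le_sum fun z _ => hterm z
    _ = (n:ℝ) * ((∑ z, p z * pkL p ptil z) + ε * pkC p ptil) := by
        unfold pkC
        rw [← Finset.mul_sum, Finset.sum_add_distrib, ← Finset.mul_sum]
lemma keyB (p : X × Y → ℝ) (hp0 : ∀ z, 0 ≤ p z)
    (ptil : X → ℝ) (hpt0 : ∀ x, 0 ≤ ptil x)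
    (habs : ∀ x, (∑ y, p (x, y)) ≠ 0 → ptil x ≠ 0) :
    ∑ z, p z * pkL p ptil z
      = -(∑ z : X × Y, p z * Real.logb 2
            (p z / ((∑ y, p (z.1, y)) * (∑ x, p (x, z.2)))))
        - (∑ x, (∑ y, p (x, y)) * Real.logb 2 ((∑ y, p (x, y)) / ptil x)) := by
  have hD : (∑ x, (∑ y, p (x, y)) * Real.logb 2 ((∑ y, p (x, y)) / ptil x))
      = ∑ z : X × Y, p z * Real.logb 2 ((∑ y, p (z.1, y)) / ptil z.1) := by
    rw [Fintype.sum_prod_type]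
    refine Finset.sum_congr rfl fun x _ => ?_
    rw [Finset.sum_mul]
  have hz0 : ∀ z : X × Y, p z * pkL p ptil z
      + p z * Real.logb 2 (p z / ((∑ y, p (z.1, y)) * (∑ x, p (x, z.2))))
      + p z * Real.logb 2 ((∑ y, p (z.1, y)) / ptil z.1) = 0 := by
    intro z
    rcases (hp0 z).eq_or_lt with h | h
    · rw [← h]; ring
    · have hX : 0 < ∑ y, p (z.1, y) :=
        lt_of_lt_of_le h (Finset.single_le_sum (fun y _ => hp0 (z.1, y)) (Finset.mem_univ z.2))
      have hY : 0 < ∑ x, p (x, z.2) :=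
        lt_of_lt_of_le h (Finset.single_le_sum (fun x _ => hp0 (x, z.2)) (Finset.mem_univ z.1))
      have hT : 0 < ptil z.1 := (hpt0 _).lt_of_ne' (habs _ hX.ne')
      have h1 : ptil z.1 * pkY p z.2 / p z ≠ 0 := by
        unfold pkY; positivity
      have h2 : p z / ((∑ y, p (z.1, y)) * (∑ x, p (x, z.2))) ≠ 0 := by positivity
      have h3 : (∑ y, p (z.1, y)) / ptil z.1 ≠ 0 := by positivity
      unfold pkL
      rw [← mul_add, ← mul_add, ← Real.logb_mul h1 h2,
        ← Real.logb_mul (mul_ne_zero h1 h2) h3]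
      have harg : ptil z.1 * pkY p z.2 / p z
          * (p z / ((∑ y, p (z.1, y)) * (∑ x, p (x, z.2))))
          * ((∑ y, p (z.1, y)) / ptil z.1) = 1 := by
        unfold pkY
        field_simp
      rw [harg, Real.logb_one, mul_zero]
  have hsum : (∑ z, p z * pkL p ptil z)
      + (∑ z : X × Y, p z * Real.logb 2
            (p z / ((∑ y, p (z.1, y)) * (∑ x, p (x, z.2)))))
      + (∑ z : X × Y, p z * Real.logb 2 ((∑ y, p (z.1, y)) / ptil z.1)) = 0 := by
    rw [← Finset.sum_add_distrib, ← Finset.sum_add_distrib]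
    rw [Finset.sum_congr rfl fun z _ => hz0 z]
    exact Finset.sum_const_zero
  rw [hD]
  linarith

lemma keyC {Ω β : Type*} [Fintype β] [DecidableEq β] (μ : PMF Ω) (g : Ω → β) :
    ∑ b, μ.toOuterMeasure {ω | g ω = b} = 1 := by
  simp_rw [PMF.toOuterMeasure_apply]
  rw [← Summable.tsum_finsetSum (fun b _ => ENNReal.summable)]
  rw [← PMF.tsum_coe μ]
  apply tsum_congr
  intro ω
  rw [Finset.sum_eq_single (g ω)]
  · simp [Set.indicator_apply]
  · intro b _ hb
    simp [Set.indicator_apply, Ne.symm hb]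
  · intro h; exact absurd (Finset.mem_univ _) h


end PackingAux

/-- Mismatched packing lemma: let `(X,Y) ∼ p` on finite alphabets and `p̃` a pmf
on `𝒳` with `D(p_X‖p̃) < ∞`. There is a function `δ(ε) → 0` (as `ε → 0⁺`) such
that for every `ε ∈ (0,1)` and every rate `R < I(X;Y) + D(p_X‖p̃) − δ(ε)`, and
any sequence of probability spaces carrying codewords `X̃^n(m)`, `m ∈ [M_n]` with
`M_n ≤ 2^{nR}`, each i.i.d. `∼ p̃` and pairwise independent of an arbitrary
`Ỹ^n`, the probability that some `(X̃^n(m), Ỹ^n)` is jointly `ε`-typical tends to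
`0` as `n → ∞`. -/
theorem stmt_14 {X Y : Type} [Fintype X] [Fintype Y] [DecidableEq X] [DecidableEq Y]
    (p : X × Y → ℝ) (hp0 : ∀ z, 0 ≤ p z) (hp1 : ∑ z, p z = 1)
    (ptil : X → ℝ) (hpt0 : ∀ x, 0 ≤ ptil x) (hpt1 : ∑ x, ptil x = 1)
    (habs : ∀ x, (∑ y, p (x, y)) ≠ 0 → ptil x ≠ 0) :
    ∃ δ : ℝ → ℝ,
      Filter.Tendsto δ (nhdsWithin 0 (Set.Ioi 0)) (nhds 0) ∧
      ∀ ε ∈ Set.Ioo (0:ℝ) 1, ∀ R : ℝ,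
        R < (∑ z : X × Y, p z * Real.logb 2
                (p z / ((∑ y, p (z.1, y)) * (∑ x, p (x, z.2)))))
            + (∑ x, (∑ y, p (x, y)) * Real.logb 2 ((∑ y, p (x, y)) / ptil x))
            - δ ε →
        ∀ (Ω : ℕ → Type) (μ : (n : ℕ) → PMF (Ω n)) (M : ℕ → ℕ)
          (Xc : (n : ℕ) → Ω n → Fin (M n) → Fin n → X)
          (Yc : (n : ℕ) → Ω n → Fin n → Y),
          (∀ n, (M n : ℝ) ≤ (2:ℝ) ^ ((n:ℝ) * R)) →
          (∀ n (m : Fin (M n)) (xs : Fin n → X),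
            (μ n).toOuterMeasure {ω | Xc n ω m = xs}
              = ENNReal.ofReal (∏ i, ptil (xs i))) →
          (∀ n (m : Fin (M n)) (xs : Fin n → X) (ys : Fin n → Y),
            (μ n).toOuterMeasure {ω | Xc n ω m = xs ∧ Yc n ω = ys}
              = (μ n).toOuterMeasure {ω | Xc n ω m = xs} *
                (μ n).toOuterMeasure {ω | Yc n ω = ys}) →
          Filter.Tendsto
            (fun n => (μ n).toOuterMeasure
              {ω | ∃ m : Fin (M n), ∀ z : X × Y,
                |((Finset.univ.filter
                    (fun i : Fin n => (Xc n ω m i, Yc n ω i) = z)).card : ℝ) / n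
                  - p z| ≤ ε * p z})
            Filter.atTop (nhds 0) := by
  classical
  refine ⟨fun ε => ε * pkC p ptil, ?_, ?_⟩
  · have h : Filter.Tendsto (fun ε : ℝ => ε * pkC p ptil) (nhds 0) (nhds 0) := by
      simpa using (continuous_mul_right (pkC p ptil)).tendsto (0:ℝ)
    exact h.mono_left nhdsWithin_le_nhds
  · rintro ε ⟨hε0, hε1⟩ R hR Ω μ M Xc Yc hM hmarg hindep
    have hXne : Nonempty X := by
      by_contra hne
      haveI : IsEmpty X := not_nonempty_iff.mp hne
      rw [Finset.univ_eq_empty, Finset.sum_empty] at hp1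
      exact zero_ne_one hp1
    set c := pkC p ptil with hc
    set S := ∑ z, p z * pkL p ptil z with hS
    have hSR := keyB p hp0 ptil hpt0 habs
    have hRS : R + S + ε * c < 0 := by
      have hR' : R < (∑ z : X × Y, p z * Real.logb 2
            (p z / ((∑ y, p (z.1, y)) * (∑ x, p (x, z.2)))))
          + (∑ x, (∑ y, p (x, y)) * Real.logb 2 ((∑ y, p (x, y)) / ptil x))
          - ε * c := hR
      linarith [hS.trans hSR]
    have hbound : ∀ n : ℕ, (μ n).toOuterMeasure
        {ω | ∃ m : Fin (M n), ∀ z : X × Y,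
          |((Finset.univ.filter
              (fun i : Fin n => (Xc n ω m i, Yc n ω i) = z)).card : ℝ) / n
            - p z| ≤ ε * p z}
        ≤ ENNReal.ofReal ((2:ℝ) ^ ((n:ℝ) * (R + S + ε * c))) := by
      intro n
      set Bn : ℝ := (2:ℝ) ^ ((n:ℝ) * (S + ε * c)) with hBn
      have hBnpos : 0 < Bn := Real.rpow_pos_of_pos two_pos _
      have hinner : ∀ ys : Fin n → Y,
          (∑ xs : Fin n → X, ENNReal.ofReal (Bn * ∏ i, pkQ p (xs i) (ys i)))
            = ENNReal.ofReal Bn := by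
        intro ys
        rw [← ENNReal.ofReal_sum_of_nonneg (fun xs _ =>
          mul_nonneg hBnpos.le (Finset.prod_nonneg fun i _ => pkQ_nonneg p hp0 _ _))]
        congr 1
        rw [← Finset.mul_sum]
        have hps : (∑ xs : Fin n → X, ∏ i, pkQ p (xs i) (ys i))
            = ∏ i : Fin n, ∑ x : X, pkQ p x (ys i) :=
          (Fintype.prod_sum (fun i x => pkQ p x (ys i))).symm
        rw [hps]
        simp [pkQ_sum p hXne]
      have hEm : ∀ m : Fin (M n), (μ n).toOuterMeasure
          {ω | ∀ z : X × Y,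
            |((Finset.univ.filter
                (fun i : Fin n => (Xc n ω m i, Yc n ω i) = z)).card : ℝ) / n
              - p z| ≤ ε * p z} ≤ ENNReal.ofReal Bn := by
        intro m
        set Spr : (Fin n → X) × (Fin n → Y) → Set (Ω n) := fun pr =>
          if (∀ z : X × Y,
              |((Finset.univ.filter
                  (fun i : Fin n => (pr.1 i, pr.2 i) = z)).card : ℝ) / n
                - p z| ≤ ε * p z)
          then {ω | Xc n ω m = pr.1 ∧ Yc n ω = pr.2} else (∅ : Set (Ω n))
          with hSpr
        have step1 : (μ n).toOuterMeasure
            {ω | ∀ z : X × Y,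
              |((Finset.univ.filter
                  (fun i : Fin n => (Xc n ω m i, Yc n ω i) = z)).card : ℝ) / n
                - p z| ≤ ε * p z}
            ≤ ∑ pr : (Fin n → X) × (Fin n → Y), (μ n).toOuterMeasure (Spr pr) := by
          refine le_trans (measure_mono ?_) (measure_iUnion_fintype_le _ _)
          intro ω hω
          refine Set.mem_iUnion.mpr ⟨(Xc n ω m, Yc n ω), ?_⟩
          have hc' : (∀ z : X × Y,
              |((Finset.univ.filter
                  (fun i : Fin n => (Xc n ω m i, Yc n ω i) = z)).card : ℝ) / n
                - p z| ≤ ε * p z) := hω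
          rw [hSpr]
          simp only
          rw [if_pos hc']
          exact ⟨rfl, rfl⟩
        have step2 : ∀ pr : (Fin n → X) × (Fin n → Y),
            (μ n).toOuterMeasure (Spr pr)
              ≤ ENNReal.ofReal (Bn * ∏ i, pkQ p (pr.1 i) (pr.2 i)) *
                  (μ n).toOuterMeasure {ω | Yc n ω = pr.2} := by
          intro pr
          rw [hSpr]
          simp only
          split_ifs with ht
          · rw [hindep n m pr.1 pr.2, hmarg n m pr.1]
            refine mul_le_mul_left (ENNReal.ofReal_le_ofReal ?_) _
            exact keyA p hp0 ptil hpt0 habs ε hε0 n pr.1 pr.2 ht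
          · simp
        refine step1.trans ?_
        calc ∑ pr : (Fin n → X) × (Fin n → Y), (μ n).toOuterMeasure (Spr pr)
            ≤ ∑ pr : (Fin n → X) × (Fin n → Y),
                ENNReal.ofReal (Bn * ∏ i, pkQ p (pr.1 i) (pr.2 i)) *
                  (μ n).toOuterMeasure {ω | Yc n ω = pr.2} :=
              Finset.sum_le_sum fun pr _ => step2 pr
          _ = ∑ ys : Fin n → Y,
                (∑ xs : Fin n → X, ENNReal.ofReal (Bn * ∏ i, pkQ p (xs i) (ys i))) *
                  (μ n).toOuterMeasure {ω | Yc n ω = ys} := by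
              rw [Fintype.sum_prod_type_right]
              refine Finset.sum_congr rfl fun ys _ => ?_
              rw [Finset.sum_mul]
          _ = ENNReal.ofReal Bn *
                ∑ ys : Fin n → Y, (μ n).toOuterMeasure {ω | Yc n ω = ys} := by
              simp_rw [hinner]
              rw [← Finset.mul_sum]
          _ = ENNReal.ofReal Bn := by
              rw [keyC (μ n) (Yc n), mul_one]
      calc (μ n).toOuterMeasure {ω | ∃ m : Fin (M n), ∀ z : X × Y, |((Finset.univ.filter (fun i : Fin n => (Xc n ω m i, Yc n ω i) = z)).card : ℝ) / n - p z| ≤ ε * p z} ≤ ∑ m : Fin (M n), (μ n).toOuterMeasure {ω | ∀ z : X × Y, |((Finset.univ.filter (fun i : Fin n => (Xc n ω m i, Yc n ω i) = z)).card : ℝ) / n - p z| ≤ ε * p z} := by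
            refine le_trans (measure_mono ?_) (measure_iUnion_fintype_le _ _)
            rintro ω ⟨m, hm⟩
            exact Set.mem_iUnion.mpr ⟨m, hm⟩
        _ ≤ ∑ _m : Fin (M n), ENNReal.ofReal Bn :=
            Finset.sum_le_sum fun m _ => hEm m
        _ = (M n : ENNReal) * ENNReal.ofReal Bn := by
            rw [Finset.sum_const, Finset.card_univ, Fintype.card_fin, nsmul_eq_mul]
        _ ≤ ENNReal.ofReal ((2:ℝ) ^ ((n:ℝ) * R)) * ENNReal.ofReal Bn := by
            refine mul_le_mul_left ?_ _
            rw [← ENNReal.ofReal_natCast]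
            exact ENNReal.ofReal_le_ofReal (hM n)
        _ = ENNReal.ofReal ((2:ℝ) ^ ((n:ℝ) * (R + S + ε * c))) := by
            rw [← ENNReal.ofReal_mul (by positivity), hBn,
              ← Real.rpow_add two_pos]
            ring_nf
    have hlim : Filter.Tendsto
        (fun n : ℕ => ENNReal.ofReal ((2:ℝ) ^ ((n:ℝ) * (R + S + ε * c))))
        Filter.atTop (nhds 0) := by
      have h1 : Filter.Tendsto (fun n : ℕ => (2:ℝ) ^ ((n:ℝ) * (R + S + ε * c)))
          Filter.atTop (nhds 0) := by
        have heq : ∀ n : ℕ, (2:ℝ) ^ ((n:ℝ) * (R + S + ε * c))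
            = ((2:ℝ) ^ (R + S + ε * c)) ^ n := by
          intro n
          rw [mul_comm, Real.rpow_mul (by norm_num), Real.rpow_natCast]
        simp_rw [heq]
        apply tendsto_pow_atTop_nhds_zero_of_lt_one
        · positivity
        · calc (2:ℝ) ^ (R + S + ε * c) < (2:ℝ) ^ (0:ℝ) :=
              (Real.rpow_lt_rpow_left_iff one_lt_two).mpr hRS
            _ = 1 := Real.rpow_zero 2
      have h2 := (ENNReal.continuous_ofReal.tendsto 0).comp h1
      simpa [Function.comp_def] using h2
    exact tendsto_of_tendsto_of_tendsto_of_le_of_le tendsto_const_nhds hlim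
      (fun n => zero_le) hbound
end
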